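/- Let L=(ℓ₁,...,ℓₙ), K=(k₁,...,kₙ) ∈ ℤⁿ with 0 < kᵢ < ℓᵢ, τ = ∏ℓᵢ, κ = ∏kᵢ, and G = ℤ_{τ−κ}, and suppose each kᵢ for 2 ≤ i ≤ n is a unit in G. Define β₁ = 1 and β_{i+1} = k_{i+1}⁻¹ ℓᵢ βᵢ for 1 ≤ i ≤ n−1. Then the map E ↦ Σᵢ εᵢβᵢ is a bijection from the discrete chair S_{L,K} onto G. -/

import Mathlib

open Finset AddChar


private lemma addChar_map_sum' {ι A M : Type*} [AddCommMonoid A] [CommMonoid M]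
    (ψ : AddChar A M) (s : Finset ι) (f : ι → A) :
    ψ (∑ i ∈ s, f i) = ∏ i ∈ s, ψ (f i) := by
  classical
  induction s using Finset.induction_on with
  | empty => simp
  | insert _ _ h ih => rw [Finset.sum_insert h, Finset.prod_insert h, AddChar.map_add_eq_mul, ih]

private theorem chair_char_sum' (n : ℕ) (ℓ k : Fin (n+1) → ℕ) (m : ℕ) [NeZero m]
    (hkl : ∀ i, k i ≤ ℓ i)
    (hτκ : (∏ i, k i) + m = ∏ i, ℓ i)
    (hu : ∀ i : Fin (n+1), i ≠ 0 → IsUnit ((k i : ZMod m)))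
    (β : Fin (n+1) → ZMod m) (hβ1 : β 0 = 1)
    (hrel : ∀ i : Fin (n+1), (ℓ i : ZMod m) * β i = (k (i+1) : ZMod m) * β (i+1))
    (p : (Fin (n+1) → ℕ) → Prop) [DecidablePred p]
    (hp : ∀ ε, p ε ↔ ∃ j, ε j < ℓ j - k j)
    (ψ : AddChar (ZMod m) ℂ) :
    ∑ ε ∈ (Fintype.piFinset fun i => Finset.range (ℓ i)).filter p,
        ψ (∑ i, (ε i : ZMod m) * β i) = ∑ x : ZMod m, ψ x := by
  classical
  set z : Fin (n+1) → ℂ := fun i => ψ (β i) with hz_def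
  have hzpow : ∀ (c : ℕ) (i : Fin (n+1)), ψ ((c : ZMod m) * β i) = z i ^ c := by
    intro c i
    rw [← nsmul_eq_mul, AddChar.map_nsmul_eq_pow]
  have hz : ∀ i, z i ^ ℓ i = z (i + 1) ^ k (i + 1) := by
    intro i; rw [← hzpow, ← hzpow, hrel]
  have hzm : ∀ i, z i ^ m = 1 := by
    intro i
    rw [← hzpow, ZMod.natCast_self, zero_mul, AddChar.map_zero_eq_one]
  have hone : ∀ i : Fin (n+1), i ≠ 0 → z i ^ k i = 1 → z i = 1 := by
    intro i hi h1
    have hc : Nat.Coprime (k i) m := (ZMod.isUnit_iff_coprime _ _).mp (hu i hi)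
    have hd := Nat.dvd_gcd (orderOf_dvd_of_pow_eq_one h1) (orderOf_dvd_of_pow_eq_one (hzm i))
    rw [Nat.Coprime] at hc
    rw [hc, Nat.dvd_one, orderOf_eq_one_iff] at hd
    exact hd
  have hfact : ∀ c : Fin (n+1) → ℕ,
      ∑ ε ∈ Fintype.piFinset (fun i => Finset.range (c i)),
          ψ (∑ i, (ε i : ZMod m) * β i) = ∏ i, ∑ a ∈ Finset.range (c i), z i ^ a := by
    intro c
    rw [Finset.prod_univ_sum]
    refine Finset.sum_congr rfl fun ε _ => ?_
    rw [addChar_map_sum']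
    exact Finset.prod_congr rfl fun i _ => hzpow (ε i) i
  have hshift : ∑ i, ((ℓ i - k i : ℕ) : ZMod m) * β i = 0 := by
    have h1 : ∀ i : Fin (n+1), ((ℓ i - k i : ℕ) : ZMod m) * β i
        = (k (i+1) : ZMod m) * β (i+1) - (k i : ZMod m) * β i := by
      intro i
      rw [Nat.cast_sub (hkl i), sub_mul, hrel]
    rw [Finset.sum_congr rfl fun i _ => h1 i, Finset.sum_sub_distrib]
    rw [Fintype.sum_equiv (Equiv.addRight (1 : Fin (n+1)))
      (fun i => (k (i+1) : ZMod m) * β (i+1)) (fun i => (k i : ZMod m) * β i)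
      (fun i => rfl)]
    exact sub_self _
  -- corner reindex
  have hcorner : ∑ ε ∈ (Fintype.piFinset fun i => Finset.range (ℓ i)).filter (fun ε => ¬ p ε),
        ψ (∑ i, (ε i : ZMod m) * β i)
      = ∑ δ ∈ Fintype.piFinset (fun i => Finset.range (k i)),
          ψ (∑ i, (δ i : ZMod m) * β i) := by
    refine Finset.sum_nbij' (fun ε i => ε i - (ℓ i - k i)) (fun δ i => δ i + (ℓ i - k i))
      ?_ ?_ ?_ ?_ ?_
    · intro ε hε
      simp only [Finset.mem_filter, Fintype.mem_piFinset, Finset.mem_range, hp, not_exists,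
        not_lt] at hε ⊢
      intro i
      have := hε.1 i
      have := hε.2 i
      have := hkl i
      omega
    · intro δ hδ
      simp only [Finset.mem_filter, Fintype.mem_piFinset, Finset.mem_range, hp, not_exists,
        not_lt] at hδ ⊢
      constructor
      · intro i; have := hδ i; have := hkl i; omega
      · intro i; omega
    · intro ε hε
      simp only [Finset.mem_filter, Fintype.mem_piFinset, Finset.mem_range, hp, not_exists,
        not_lt] at hε
      funext i
      show ε i - (ℓ i - k i) + (ℓ i - k i) = ε i
      have := hε.2 i
      omega
    · intro δ hδ
      funext i
      show δ i + (ℓ i - k i) - (ℓ i - k i) = δ i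
      omega
    · intro ε hε
      simp only [Finset.mem_filter, Fintype.mem_piFinset, Finset.mem_range, hp, not_exists,
        not_lt] at hε
      have key : ∑ i, (ε i : ZMod m) * β i
          = (∑ i, ((ε i - (ℓ i - k i) : ℕ) : ZMod m) * β i)
            + ∑ i, ((ℓ i - k i : ℕ) : ZMod m) * β i := by
        rw [← Finset.sum_add_distrib]
        refine Finset.sum_congr rfl fun i _ => ?_
        rw [← add_mul, ← Nat.cast_add]
        congr 2
        have := hε.2 i
        omega
      rw [key, hshift, add_zero]
  -- split the box sum
  have hbox := Finset.sum_filter_add_sum_filter_not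
    (Fintype.piFinset fun i => Finset.range (ℓ i)) p
    (fun ε => ψ (∑ i, (ε i : ZMod m) * β i))
  rw [hcorner, hfact k] at hbox
  have hLHS : ∑ ε ∈ (Fintype.piFinset fun i => Finset.range (ℓ i)).filter p,
      ψ (∑ i, (ε i : ZMod m) * β i)
      = (∏ i, ∑ a ∈ Finset.range (ℓ i), z i ^ a)
        - ∏ i, ∑ a ∈ Finset.range (k i), z i ^ a := by
    rw [← hfact ℓ]
    linear_combination hbox
  rw [hLHS]
  by_cases hψ : ψ = 1
  · -- trivial character
    subst hψ
    have hz1 : ∀ i, z i = 1 := fun i => AddChar.one_apply _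
    have hA : ∀ c : Fin (n+1) → ℕ,
        ∏ i, ∑ a ∈ Finset.range (c i), z i ^ a = ∏ i, (c i : ℂ) := by
      intro c
      refine Finset.prod_congr rfl fun i _ => ?_
      simp [hz1 i]
    rw [hA, hA]
    have hcard : ∑ x : ZMod m, (1 : AddChar (ZMod m) ℂ) x = (m : ℂ) := by
      simp [AddChar.one_apply, ZMod.card]
    rw [hcard]
    have h2 : ((∏ i, k i : ℕ) : ℂ) + (m : ℂ) = ((∏ i, ℓ i : ℕ) : ℂ) := by
      exact_mod_cast congrArg (fun t : ℕ => (t : ℂ)) hτκ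
    rw [Nat.cast_prod, Nat.cast_prod] at h2
    linear_combination -h2
  · -- nontrivial character
    have hψ1 : ψ (1 : ZMod m) ≠ 1 := (AddChar.zmod_char_ne_one_iff m ψ).mp hψ
    have hz0 : z 0 ≠ 1 := by
      rw [hz_def]
      simpa [hβ1] using hψ1
    rw [AddChar.sum_eq_zero_of_ne_one hψ]
    by_cases hall : ∀ i, z i ≠ 1
    · -- all z i ≠ 1 : products equal
      rw [sub_eq_zero]
      have h1 : ∀ (c : Fin (n+1) → ℕ),
          ∏ i, ∑ a ∈ Finset.range (c i), z i ^ a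
            = (∏ i, (z i ^ c i - 1)) / ∏ i, (z i - 1) := by
        intro c
        rw [← Finset.prod_div_distrib]
        exact Finset.prod_congr rfl fun i _ => geom_sum_eq (hall i) (c i)
      rw [h1, h1]
      congr 1
      calc ∏ i, (z i ^ ℓ i - 1) = ∏ i, (z (i+1) ^ k (i+1) - 1) :=
            Finset.prod_congr rfl fun i _ => by rw [hz]
        _ = ∏ i, (z i ^ k i - 1) :=
            Fintype.prod_equiv (Equiv.addRight (1 : Fin (n+1))) _ _ (fun i => rfl)
    · -- some z j = 1
      push_neg at hall
      obtain ⟨j, hj⟩ := hall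
      have hprop : ∀ t : ℕ, (ht : t < n + 1) → (j : ℕ) ≤ t → z ⟨t, ht⟩ = 1 := by
        intro t
        induction t with
        | zero =>
          intro ht h0
          have : j = ⟨0, ht⟩ := by
            apply Fin.ext; simpa using h0
          rwa [← this]
        | succ s ih =>
          intro ht hle
          rcases Nat.lt_or_ge (j : ℕ) (s + 1) with hlt | hge
          · have hs : s < n + 1 := by omega
            have hzs : z ⟨s, hs⟩ = 1 := ih hs (by omega)
            have hsucc : (⟨s, hs⟩ : Fin (n+1)) + 1 = ⟨s+1, ht⟩ := by
              apply Fin.ext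
              rw [Fin.val_add_one]
              have hne : (⟨s, hs⟩ : Fin (n+1)) ≠ Fin.last n := by
                simp only [ne_eq, Fin.ext_iff, Fin.val_last]; omega
              rw [if_neg hne]
            have hz' := hz ⟨s, hs⟩
            rw [hzs, one_pow, hsucc] at hz'
            exact hone ⟨s+1, ht⟩ (by simp [Fin.ext_iff]) hz'.symm
          · have : j = ⟨s+1, ht⟩ := by apply Fin.ext; simp; omega
            rwa [← this]
      have hlast : z ⟨n, Nat.lt_succ_self n⟩ = 1 := hprop n _ (by omega)
      have hwrap : z 0 ^ k 0 = 1 := by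
        have hz' := hz ⟨n, Nat.lt_succ_self n⟩
        have hl : (⟨n, Nat.lt_succ_self n⟩ : Fin (n+1)) + 1 = 0 := by
          apply Fin.ext
          rw [Fin.val_add_one]
          have he : (⟨n, Nat.lt_succ_self n⟩ : Fin (n+1)) = Fin.last n := rfl
          rw [if_pos he]
          simp
        rw [hlast, one_pow, hl] at hz'
        exact hz'.symm
      have hA : ∏ i, ∑ a ∈ Finset.range (ℓ i), z i ^ a = 0 := by
        have hex : ∃ t : ℕ, ∃ ht : t < n + 1, z ⟨t, ht⟩ = 1 := ⟨j, j.isLt, by simpa using hj⟩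
        set t0 := Nat.find hex with ht0_def
        obtain ⟨ht0, hzt0⟩ := Nat.find_spec hex
        have ht0pos : 0 < t0 := by
          rcases Nat.eq_zero_or_pos t0 with h | h
          · exfalso
            apply hz0
            have he : (0 : Fin (n+1)) = ⟨t0, ht0⟩ := by apply Fin.ext; simp [h]
            rw [he]; exact hzt0
          · exact h
        have hpred : t0 - 1 < n + 1 := by omega
        have hzpred : z ⟨t0 - 1, hpred⟩ ≠ 1 := by
          have hmin := Nat.find_min hex (m := t0 - 1) (by omega)
          intro hcon
          exact hmin ⟨hpred, hcon⟩
        have hsucc : (⟨t0 - 1, hpred⟩ : Fin (n+1)) + 1 = ⟨t0, ht0⟩ := by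
          apply Fin.ext
          rw [Fin.val_add_one]
          have hne : (⟨t0 - 1, hpred⟩ : Fin (n+1)) ≠ Fin.last n := by
            simp only [ne_eq, Fin.ext_iff, Fin.val_last]; omega
          rw [if_neg hne]
          simp; omega
        have hzero : ∑ a ∈ Finset.range (ℓ ⟨t0 - 1, hpred⟩), z ⟨t0 - 1, hpred⟩ ^ a = 0 := by
          rw [geom_sum_eq hzpred]
          rw [hz, hsucc, hzt0, one_pow, sub_self, zero_div]
        exact Finset.prod_eq_zero (Finset.mem_univ _) hzero
      have hB : ∏ i, ∑ a ∈ Finset.range (k i), z i ^ a = 0 := by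
        have hzero : ∑ a ∈ Finset.range (k 0), z 0 ^ a = 0 := by
          rw [geom_sum_eq hz0, hwrap, sub_self, zero_div]
        exact Finset.prod_eq_zero (Finset.mem_univ _) hzero
      rw [hA, hB, sub_zero]

private theorem count_eq_one' {α : Type*} [DecidableEq α] (m : ℕ) [NeZero m]
    (F : Finset α) (Φ : α → ZMod m)
    (h : ∀ ψ : AddChar (ZMod m) ℂ, ∑ ε ∈ F, ψ (Φ ε) = ∑ x : ZMod m, ψ x)
    (g : ZMod m) : (F.filter fun ε => Φ ε = g).card = 1 := by
  classical
  have key : (fun x : ZMod m => ((F.filter fun ε => Φ ε = x).card : ℂ)) = fun _ => (1 : ℂ) := by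
    apply ZMod.dft.injective
    funext kk
    rw [ZMod.dft_apply, ZMod.dft_apply]
    set ψ : AddChar (ZMod m) ℂ := AddChar.mulShift ZMod.stdAddChar (-kk) with hψdef
    have hψ : ∀ j : ZMod m, ZMod.stdAddChar (-(j * kk)) = ψ j := by
      intro j
      rw [hψdef, AddChar.mulShift_apply]
      ring_nf
    calc ∑ j : ZMod m, ZMod.stdAddChar (-(j * kk)) • ((F.filter fun ε => Φ ε = j).card : ℂ)
        = ∑ j : ZMod m, ∑ ε ∈ F.filter fun ε => Φ ε = j, ψ (Φ ε) := by
          refine Finset.sum_congr rfl fun j _ => ?_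
          rw [Finset.sum_congr rfl (fun ε hε => by
            rw [(Finset.mem_filter.mp hε).2]), Finset.sum_const, hψ j, smul_eq_mul,
            nsmul_eq_mul, mul_comm]
      _ = ∑ ε ∈ F, ψ (Φ ε) := Finset.sum_fiberwise F Φ fun ε => ψ (Φ ε)
      _ = ∑ x : ZMod m, ψ x := h ψ
      _ = ∑ j : ZMod m, ZMod.stdAddChar (-(j * kk)) • (1 : ℂ) := by
          refine Finset.sum_congr rfl fun j _ => ?_
          rw [hψ j, smul_eq_mul, mul_one]
  have := congrFun key g
  exact_mod_cast this

/-- Generalized splitting of `G = ℤ_{τ−κ}` by the discrete chair `S_{L,K}`: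
with `β₁ = 1` and `β_{i+1} = k_{i+1}⁻¹ ℓᵢ βᵢ`, the map `E ↦ Σᵢ εᵢβᵢ` is a
bijection from the chair onto `G`. -/
theorem chair_general_splitting (n : ℕ) (hn : 0 < n) (ℓ k : Fin n → ℕ)
    (hlk : ∀ i, 0 < k i ∧ k i < ℓ i)
    (hunit : ∀ i : Fin n, 0 < (i : ℕ) →
      IsUnit ((k i : ZMod ((∏ i, ℓ i) - ∏ i, k i))))
    (β : Fin n → ZMod ((∏ i, ℓ i) - ∏ i, k i))
    (hβ0 : β ⟨0, hn⟩ = 1)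
    (hβ : ∀ i : ℕ, (h : i + 1 < n) →
      β ⟨i + 1, h⟩ =
        Ring.inverse ((k ⟨i + 1, h⟩ : ZMod ((∏ i, ℓ i) - ∏ i, k i))) *
          (ℓ ⟨i, by omega⟩ : ZMod ((∏ i, ℓ i) - ∏ i, k i)) * β ⟨i, by omega⟩) :
    Set.BijOn (fun ε : Fin n → ℕ => ∑ i, (ε i : ZMod ((∏ i, ℓ i) - ∏ i, k i)) * β i)
      {ε : Fin n → ℕ | (∀ i, ε i < ℓ i) ∧ ∃ j, ε j < ℓ j - k j}
      Set.univ := by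
  classical
  obtain ⟨n', rfl⟩ : ∃ n', n = n' + 1 := ⟨n - 1, by omega⟩
  have hκτ : (∏ i, k i) < ∏ i, ℓ i := by
    apply Finset.prod_lt_prod_of_nonempty
    · intro i _; exact (hlk i).1
    · intro i _; exact (hlk i).2
    · exact Finset.univ_nonempty
  revert hunit β hβ0 hβ
  generalize hOK : (∏ i, ℓ i) - ∏ i, k i = m
  intro hunit β hβ0 hβ
  have hτκ : (∏ i, k i) + m = ∏ i, ℓ i := by omega
  haveI : NeZero m := ⟨by omega⟩
  have hkl : ∀ i, k i ≤ ℓ i := fun i => le_of_lt (hlk i).2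
  have hβ1 : β 0 = 1 := by rw [← Fin.mk_zero]; exact hβ0
  have hunit' : ∀ i : Fin (n' + 1), i ≠ 0 → IsUnit ((k i : ZMod m)) := by
    intro i hi
    exact hunit i (by
      rcases Nat.eq_zero_or_pos (i : ℕ) with h | h
      · exact absurd (Fin.ext h) hi
      · exact h)
  -- single-step relation in non-wrapping form
  have hstep : ∀ s : ℕ, (hs1 : s + 1 < n' + 1) →
      (k ⟨s + 1, hs1⟩ : ZMod m) * β ⟨s + 1, hs1⟩
        = (ℓ ⟨s, by omega⟩ : ZMod m) * β ⟨s, by omega⟩ := by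
    intro s hs1
    rw [hβ s hs1, ← mul_assoc, ← mul_assoc,
      Ring.mul_inverse_cancel _ (hunit ⟨s + 1, hs1⟩ (by simp)), one_mul]
  -- totalized sequences
  set K' : ℕ → ZMod m := fun s => if h : s < n' + 1 then (k ⟨s, h⟩ : ZMod m) else 1 with hK'
  set L' : ℕ → ZMod m := fun s => if h : s < n' + 1 then (ℓ ⟨s, h⟩ : ZMod m) else 1 with hL'
  have hKs : ∀ (s : ℕ) (h : s < n' + 1), K' s = (k ⟨s, h⟩ : ZMod m) := by
    intro s h; rw [hK']; exact dif_pos h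
  have hLs : ∀ (s : ℕ) (h : s < n' + 1), L' s = (ℓ ⟨s, h⟩ : ZMod m) := by
    intro s h; rw [hL']; exact dif_pos h
  have hcum : ∀ t : ℕ, (ht : t < n' + 1) →
      (∏ s ∈ Finset.range t, K' (s + 1)) * β ⟨t, ht⟩ = ∏ s ∈ Finset.range t, L' s := by
    intro t
    induction t with
    | zero =>
      intro ht
      rw [Fin.mk_zero, hβ1]
      simp
    | succ s ih =>
      intro ht
      have hs : s < n' + 1 := by omega
      rw [Finset.prod_range_succ, Finset.prod_range_succ]
      calc (∏ x ∈ Finset.range s, K' (x + 1)) * K' (s + 1) * β ⟨s + 1, ht⟩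
          = (∏ x ∈ Finset.range s, K' (x + 1)) *
              ((k ⟨s + 1, ht⟩ : ZMod m) * β ⟨s + 1, ht⟩) := by
            rw [hKs (s + 1) ht]; ring
        _ = (∏ x ∈ Finset.range s, K' (x + 1)) *
              ((ℓ ⟨s, hs⟩ : ZMod m) * β ⟨s, hs⟩) := by rw [hstep s ht]
        _ = ((∏ x ∈ Finset.range s, K' (x + 1)) * β ⟨s, hs⟩) * (ℓ ⟨s, hs⟩ : ZMod m) := by
            ring
        _ = (∏ x ∈ Finset.range s, L' x) * L' s := by rw [ih hs, hLs s hs]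
  -- cast of the two total products
  have hτZ : ∏ s ∈ Finset.range (n' + 1), L' s = ((∏ i, ℓ i : ℕ) : ZMod m) := by
    rw [Nat.cast_prod, ← Fin.prod_univ_eq_prod_range (fun s => L' s) (n' + 1)]
    exact Finset.prod_congr rfl fun i _ => by rw [hLs i i.isLt]
  have hκZ : ∏ s ∈ Finset.range (n' + 1), K' s = ((∏ i, k i : ℕ) : ZMod m) := by
    rw [Nat.cast_prod, ← Fin.prod_univ_eq_prod_range (fun s => K' s) (n' + 1)]
    exact Finset.prod_congr rfl fun i _ => by rw [hKs i i.isLt]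
  have hcast : ((∏ i, ℓ i : ℕ) : ZMod m) = ((∏ i, k i : ℕ) : ZMod m) := by
    rw [← hτκ]
    push_cast
    rw [ZMod.natCast_self, add_zero]
  -- wrap-around relation
  have hwrap : (ℓ ⟨n', Nat.lt_succ_self n'⟩ : ZMod m) * β ⟨n', Nat.lt_succ_self n'⟩
      = (k 0 : ZMod m) := by
    have hU : IsUnit (∏ s ∈ Finset.range n', K' (s + 1)) := by
      refine Finset.prod_induction _ IsUnit (fun a b => IsUnit.mul) isUnit_one ?_
      intro s hs
      rw [Finset.mem_range] at hs
      rw [hKs (s + 1) (by omega)]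
      exact hunit' ⟨s + 1, by omega⟩ (by simp [Fin.ext_iff])
    apply hU.mul_left_cancel
    calc (∏ s ∈ Finset.range n', K' (s + 1)) *
          ((ℓ ⟨n', Nat.lt_succ_self n'⟩ : ZMod m) * β ⟨n', Nat.lt_succ_self n'⟩)
        = ((∏ s ∈ Finset.range n', K' (s + 1)) * β ⟨n', Nat.lt_succ_self n'⟩) *
            (ℓ ⟨n', Nat.lt_succ_self n'⟩ : ZMod m) := by ring
      _ = (∏ s ∈ Finset.range n', L' s) * L' n' := by
          rw [hcum n' (Nat.lt_succ_self n'), hLs n' (Nat.lt_succ_self n')]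
      _ = ∏ s ∈ Finset.range (n' + 1), L' s := (Finset.prod_range_succ L' n').symm
      _ = ((∏ i, ℓ i : ℕ) : ZMod m) := hτZ
      _ = ((∏ i, k i : ℕ) : ZMod m) := hcast
      _ = ∏ s ∈ Finset.range (n' + 1), K' s := hκZ.symm
      _ = (∏ s ∈ Finset.range n', K' (s + 1)) * K' 0 := Finset.prod_range_succ' K' n'
      _ = (∏ s ∈ Finset.range n', K' (s + 1)) * (k 0 : ZMod m) := by
          rw [hKs 0 (by omega), Fin.mk_zero]
  -- full cyclic relation
  have hrel : ∀ i : Fin (n' + 1),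
      (ℓ i : ZMod m) * β i = (k (i + 1) : ZMod m) * β (i + 1) := by
    intro i
    by_cases hi : (i : ℕ) < n'
    · have h1 : (i : ℕ) + 1 < n' + 1 := by omega
      have hsucc : i + 1 = ⟨(i : ℕ) + 1, h1⟩ := by
        apply Fin.ext
        rw [Fin.val_add_one]
        have hne : i ≠ Fin.last n' := by
          simp only [ne_eq, Fin.ext_iff, Fin.val_last]; omega
        rw [if_neg hne]
      rw [hsucc]
      exact (hstep (i : ℕ) h1).symm
    · have hieq : i = ⟨n', Nat.lt_succ_self n'⟩ := by
        apply Fin.ext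
        have := i.isLt
        simp only []
        omega
      have hsucc : i + 1 = 0 := by
        apply Fin.ext
        rw [Fin.val_add_one]
        have he : i = Fin.last n' := by
          apply Fin.ext; rw [Fin.val_last]; have := i.isLt; omega
        rw [if_pos he]
        simp
      rw [hsucc, hβ1, mul_one, hieq, hwrap]
  -- counting
  have hcount : ∀ g : ZMod m,
      (((Fintype.piFinset fun i => Finset.range (ℓ i)).filter
          (fun ε => ∃ j, ε j < ℓ j - k j)).filter
        fun ε => ∑ i, (ε i : ZMod m) * β i = g).card = 1 := by
    intro g
    refine count_eq_one' m _ _ (fun ψ => ?_) g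
    exact chair_char_sum' n' ℓ k m hkl hτκ hunit' β hβ1 hrel _ (fun ε => Iff.rfl) ψ
  have hmem : ∀ ε : Fin (n' + 1) → ℕ,
      ((∀ i, ε i < ℓ i) ∧ ∃ j, ε j < ℓ j - k j)
        ↔ ε ∈ (Fintype.piFinset fun i => Finset.range (ℓ i)).filter
            (fun ε => ∃ j, ε j < ℓ j - k j) := by
    intro ε
    simp only [Finset.mem_filter, Fintype.mem_piFinset, Finset.mem_range]
  refine ⟨fun ε _ => Set.mem_univ _, ?_, ?_⟩
  · -- InjOn
    intro a ha b hb hab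
    obtain ⟨c, hc⟩ := Finset.card_eq_one.mp (hcount (∑ i, (a i : ZMod m) * β i))
    have hac : a ∈ ((Fintype.piFinset fun i => Finset.range (ℓ i)).filter
          (fun ε => ∃ j, ε j < ℓ j - k j)).filter
        (fun ε => ∑ i, (ε i : ZMod m) * β i = ∑ i, (a i : ZMod m) * β i) :=
      Finset.mem_filter.mpr ⟨(hmem a).mp ha, rfl⟩
    have hbc : b ∈ ((Fintype.piFinset fun i => Finset.range (ℓ i)).filter
          (fun ε => ∃ j, ε j < ℓ j - k j)).filter
        (fun ε => ∑ i, (ε i : ZMod m) * β i = ∑ i, (a i : ZMod m) * β i) :=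
      Finset.mem_filter.mpr ⟨(hmem b).mp hb, hab.symm⟩
    rw [hc, Finset.mem_singleton] at hac hbc
    rw [hac, hbc]
  · -- SurjOn
    intro g _
    have h1 : 0 < (((Fintype.piFinset fun i => Finset.range (ℓ i)).filter
          (fun ε => ∃ j, ε j < ℓ j - k j)).filter
        fun ε => ∑ i, (ε i : ZMod m) * β i = g).card := by
      rw [hcount g]; omega
    obtain ⟨ε, hε⟩ := Finset.card_pos.mp h1
    rw [Finset.mem_filter] at hε
    exact ⟨ε, (hmem ε).mpr hε.1, hε.2⟩
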